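/- Let (m_1,…,m_r) be a tuple of positive integers with m = lcm(m_1,…,m_r). Then E(m_1,…,m_r) ≠ 0 if and only if for every prime p dividing m the following hold: if p is odd then s(p) ≥ 2 (equivalently, the lcm of the m_j with any single one omitted is still m), and if p = 2 then s(2) is even, where s(p) = #{j : a_j(p) = a(p)} counts the arguments divisible by the maximal power of p dividing m. -/

import Mathlib

/-- The von Sterneck function `Φ(k,n) = μ(n/gcd(k,n)) * φ(n) / φ(n/gcd(k,n))`. -/
noncomputable def vonSterneck (k n : ℕ) : ℚ :=
  (ArithmeticFunction.moebius (n / Nat.gcd k n) : ℚ) * (Nat.totient n : ℚ) /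
    (Nat.totient (n / Nat.gcd k n) : ℚ)

open Finset

lemma vs_one (k : ℕ) : vonSterneck k 1 = 1 := by
  simp [vonSterneck]

lemma vs_of_dvd {k n : ℕ} (hn : 0 < n) (h : n ∣ k) : vonSterneck k n = n.totient := by
  have hg : Nat.gcd k n = n := Nat.gcd_eq_right h
  simp [vonSterneck, hg, Nat.div_self hn]

lemma gcd_mod {k N n : ℕ} (h : n ∣ N) : Nat.gcd (k % N) n = Nat.gcd k n := by
  rw [Nat.gcd_comm, Nat.gcd_rec n (k % N), Nat.mod_mod_of_dvd k h, ← Nat.gcd_rec,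
    Nat.gcd_comm]

lemma vs_mod {k N n : ℕ} (h : n ∣ N) : vonSterneck (k % N) n = vonSterneck k n := by
  unfold vonSterneck
  rw [gcd_mod h]

lemma gcd_mul_coprime {k a b : ℕ} (ha : a ≠ 0) (hb : b ≠ 0) (h : a.Coprime b) :
    Nat.gcd k (a * b) = Nat.gcd k a * Nat.gcd k b := by
  rcases eq_or_ne k 0 with rfl | hk
  · simp
  have hab : a * b ≠ 0 := mul_ne_zero ha hb
  apply Nat.eq_of_factorization_eq (Nat.gcd_ne_zero_left hk)
    (mul_ne_zero (Nat.gcd_ne_zero_left hk) (Nat.gcd_ne_zero_left hk))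
  intro q
  have hdisj : (Nat.gcd a b).factorization q = 0 := by
    rw [h]; simp
  rw [Nat.factorization_gcd ha hb] at hdisj
  simp only [Finsupp.inf_apply] at hdisj
  rw [Nat.factorization_gcd hk hab, Nat.factorization_mul ha hb,
    Nat.factorization_mul (Nat.gcd_ne_zero_left hk) (Nat.gcd_ne_zero_left hk),
    Nat.factorization_gcd hk ha, Nat.factorization_gcd hk hb]
  simp only [Finsupp.inf_apply, Finsupp.add_apply]
  omega

lemma vs_mul {k a b : ℕ} (ha : 0 < a) (hb : 0 < b) (h : a.Coprime b) :
    vonSterneck k (a * b) = vonSterneck k a * vonSterneck k b := by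
  have hga : Nat.gcd k a ∣ a := Nat.gcd_dvd_right k a
  have hgb : Nat.gcd k b ∣ b := Nat.gcd_dvd_right k b
  have hda : a / Nat.gcd k a ∣ a := Nat.div_dvd_of_dvd hga
  have hdb : b / Nat.gcd k b ∣ b := Nat.div_dvd_of_dvd hgb
  have hcop' : (a / Nat.gcd k a).Coprime (b / Nat.gcd k b) :=
    Nat.Coprime.coprime_dvd_right hdb (Nat.Coprime.coprime_dvd_left hda h)
  unfold vonSterneck
  rw [gcd_mul_coprime ha.ne' hb.ne' h, ← Nat.div_mul_div_comm hga hgb,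
    ArithmeticFunction.isMultiplicative_moebius.map_mul_of_coprime hcop',
    Nat.totient_mul h, Nat.totient_mul hcop']
  push_cast
  ring

lemma vs_pp_mid {p : ℕ} (hp : p.Prime) {e : ℕ} (he : 1 ≤ e) {t : ℕ} (ht : ¬ p ∣ t) :
    vonSterneck (p ^ (e - 1) * t) (p ^ e) = -(p : ℚ) ^ (e - 1) := by
  have hco : Nat.Coprime t (p ^ e) :=
    Nat.Coprime.pow_right e ((hp.coprime_iff_not_dvd.mpr ht).symm)
  have hg : Nat.gcd (p ^ (e - 1) * t) (p ^ e) = p ^ (e - 1) := by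
    rw [Nat.Coprime.gcd_mul_right_cancel _ hco]
    exact Nat.gcd_eq_left (pow_dvd_pow p (by omega))
  have hdiv : p ^ e / p ^ (e - 1) = p := by
    rw [Nat.pow_div (by omega) hp.pos, show e - (e - 1) = 1 by omega, pow_one]
  have hpq : (1 : ℚ) < (p : ℚ) := by exact_mod_cast hp.one_lt
  unfold vonSterneck
  rw [hg, hdiv, ArithmeticFunction.moebius_apply_prime hp, Nat.totient_prime hp,
    Nat.totient_prime_pow hp (by omega)]
  rw [div_eq_iff (Nat.cast_ne_zero.mpr (Nat.sub_ne_zero_of_lt hp.one_lt) : ((p - 1 : ℕ) : ℚ) ≠ 0)]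
  push_cast [Nat.cast_sub hp.one_le]
  ring

lemma vs_pp_low {p : ℕ} (hp : p.Prime) {e w : ℕ} (hwe : w + 2 ≤ e) {t : ℕ} (ht : ¬ p ∣ t) :
    vonSterneck (p ^ w * t) (p ^ e) = 0 := by
  have hco : Nat.Coprime t (p ^ e) :=
    Nat.Coprime.pow_right e ((hp.coprime_iff_not_dvd.mpr ht).symm)
  have hg : Nat.gcd (p ^ w * t) (p ^ e) = p ^ w := by
    rw [Nat.Coprime.gcd_mul_right_cancel _ hco]
    exact Nat.gcd_eq_left (pow_dvd_pow p (by omega))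
  have hdiv : p ^ e / p ^ w = p ^ (e - w) := Nat.pow_div (by omega) hp.pos
  have hmu : ArithmeticFunction.moebius (p ^ (e - w)) = 0 := by
    rw [ArithmeticFunction.moebius_apply_prime_pow hp (by omega)]
    simp only [if_neg (by omega : ¬ e - w = 1)]
  unfold vonSterneck
  rw [hg, hdiv, hmu]
  simp

lemma sum_pp {p : ℕ} (hp : p.Prime) {r : ℕ} (a : Fin r → ℕ) {A : ℕ} (hA : 1 ≤ A)
    (hle : ∀ j, a j ≤ A) (hex : ∃ j, a j = A) :
    ∑ k ∈ range (p ^ A), ∏ j, vonSterneck k (p ^ a j)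
      = (∏ j, ((p ^ a j : ℕ).totient : ℚ))
        + ((p : ℚ) - 1) *
          ∏ j, (if a j = A then -(p : ℚ) ^ (A - 1) else ((p ^ a j : ℕ).totient : ℚ)) := by
  obtain ⟨J, hJ⟩ := hex
  have hp1 : 1 < p := hp.one_lt
  have hppos : 0 < p ^ A := pow_pos hp.pos A
  -- restrict to multiples of p^(A-1)
  have h1 : ∑ k ∈ range (p ^ A), ∏ j, vonSterneck k (p ^ a j)
      = ∑ k ∈ (range (p ^ A)).filter (fun k => p ^ (A - 1) ∣ k),
          ∏ j, vonSterneck k (p ^ a j) := by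
    refine (Finset.sum_filter_of_ne ?_).symm
    intro k hk hne
    by_contra hnd
    apply hne
    have hk0 : k ≠ 0 := by rintro rfl; exact hnd (dvd_zero _)
    set w := k.factorization p with hw
    have hkeq : p ^ w * (k / p ^ w) = k := Nat.ordProj_mul_ordCompl_eq_self k p
    have htnd : ¬ p ∣ (k / p ^ w) := Nat.not_dvd_ordCompl hp hk0
    have hwlt : w + 2 ≤ A := by
      by_contra hcon
      exact hnd (dvd_trans (pow_dvd_pow p (by omega)) (Nat.ordProj_dvd k p))
    refine Finset.prod_eq_zero (mem_univ J) ?_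
    rw [← hkeq]
    exact vs_pp_low hp (hJ ▸ hwlt) htnd
  have hpow : p ^ A = p ^ (A - 1) * p := by
    rw [← pow_succ]
    congr 1
    omega
  have hppos' : 0 < p ^ (A - 1) := pow_pos hp.pos _
  have h2 : ∑ k ∈ (range (p ^ A)).filter (fun k => p ^ (A - 1) ∣ k),
        ∏ j, vonSterneck k (p ^ a j)
      = ∑ t ∈ range p, ∏ j, vonSterneck (p ^ (A - 1) * t) (p ^ a j) := by
    refine Finset.sum_nbij' (fun k => k / p ^ (A - 1)) (fun t => p ^ (A - 1) * t)
      ?_ ?_ ?_ ?_ ?_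
    · intro k hk
      simp only [mem_filter, mem_range] at hk
      simp only [mem_range]
      rw [Nat.div_lt_iff_lt_mul hppos']
      have := hk.1
      rw [hpow, mul_comm] at this
      exact this
    · intro t ht
      simp only [mem_range] at ht
      simp only [mem_filter, mem_range]
      exact ⟨by rw [hpow]; exact (Nat.mul_lt_mul_left hppos').mpr ht, dvd_mul_right _ _⟩
    · intro k hk
      simp only [mem_filter] at hk
      exact Nat.mul_div_cancel' hk.2
    · intro t _
      exact Nat.mul_div_cancel_left t hppos'
    · intro k hk
      simp only [mem_filter] at hk
      rw [Nat.mul_div_cancel' hk.2]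
  have h3 : ∑ t ∈ range p, ∏ j, vonSterneck (p ^ (A - 1) * t) (p ^ a j)
      = (∏ j, ((p ^ a j : ℕ).totient : ℚ))
        + ((p : ℚ) - 1) *
          ∏ j, (if a j = A then -(p : ℚ) ^ (A - 1) else ((p ^ a j : ℕ).totient : ℚ)) := by
    rw [Finset.range_eq_Ico, Finset.sum_eq_sum_Ico_succ_bot hp.pos]
    congr 1
    · rw [mul_zero]
      exact Finset.prod_congr rfl fun j _ =>
        vs_of_dvd (pow_pos hp.pos _) (dvd_zero _)
    · have hconst : ∀ t ∈ Finset.Ico 1 p,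
          (∏ j, vonSterneck (p ^ (A - 1) * t) (p ^ a j))
            = ∏ j, (if a j = A then -(p : ℚ) ^ (A - 1) else ((p ^ a j : ℕ).totient : ℚ)) := by
        intro t ht
        simp only [Finset.mem_Ico] at ht
        have htnd : ¬ p ∣ t := Nat.not_dvd_of_pos_of_lt (by omega) ht.2
        refine Finset.prod_congr rfl fun j _ => ?_
        by_cases hj : a j = A
        · rw [if_pos hj, hj]
          exact vs_pp_mid hp hA htnd
        · rw [if_neg hj]
          have hdvd : p ^ a j ∣ p ^ (A - 1) * t :=
            dvd_mul_of_dvd_left (pow_dvd_pow p (by have := hle j; omega : a j ≤ A - 1)) t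
          exact vs_of_dvd (pow_pos hp.pos _) hdvd
      rw [Finset.sum_congr rfl hconst, Finset.sum_const, Nat.card_Ico,
        nsmul_eq_mul]
      congr 1
      push_cast [Nat.cast_sub hp.one_le]
      ring
  rw [h1, h2, h3]

lemma bracket_ne_zero {p s : ℕ} (hp : 2 ≤ p) (hs : 1 ≤ s) :
    ((p : ℚ) - 1) ^ s + ((p : ℚ) - 1) * (-1) ^ s ≠ 0 ↔
      ((p ≠ 2 → 2 ≤ s) ∧ (p = 2 → Even s)) := by
  have hpq : (2 : ℚ) ≤ (p : ℚ) := by exact_mod_cast hp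
  rcases eq_or_ne p 2 with rfl | hp2
  · simp only [ne_eq, not_true_eq_false, false_implies, true_and, forall_const]
    norm_num
    rcases Nat.even_or_odd s with h | h
    · simp [h, Even.neg_one_pow h]
    · simp [h, Odd.neg_one_pow h, Nat.not_even_iff_odd.mpr h]
  · have hp3 : (3 : ℚ) ≤ (p : ℚ) := by
      have : 3 ≤ p := by omega
      exact_mod_cast this
    simp only [hp2, ne_eq, not_false_eq_true, true_implies, false_implies, and_true]
    constructor
    · intro hne
      by_contra hcon
      have hs1 : s = 1 := by omega
      subst hs1
      simp at hne
    · intro h2s hzero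
      set x : ℚ := (p : ℚ) - 1 with hx
      have hx2 : (2 : ℚ) ≤ x := by rw [hx]; linarith
      rcases Nat.even_or_odd s with h | h
      · rw [Even.neg_one_pow h] at hzero
        have : (0:ℚ) < x ^ s + x * 1 := by positivity
        linarith
      · rw [Odd.neg_one_pow h] at hzero
        have hxs : x ^ 2 ≤ x ^ s := by
          apply pow_le_pow_right₀ (by linarith) h2s
        have hx2' : x * 2 ≤ x ^ 2 := by nlinarith
        nlinarith

lemma sum_pp_ne_zero {p : ℕ} (hp : p.Prime) {r : ℕ} (a : Fin r → ℕ) {A : ℕ} (hA : 1 ≤ A)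
    (hle : ∀ j, a j ≤ A) (hex : ∃ j, a j = A) :
    (∑ k ∈ range (p ^ A), ∏ j, vonSterneck k (p ^ a j)) ≠ 0 ↔
      ((p ≠ 2 → 2 ≤ (univ.filter fun j => a j = A).card) ∧
        (p = 2 → Even (univ.filter fun j => a j = A).card)) := by
  rw [sum_pp hp a hA hle hex]
  set s := (univ.filter fun j => a j = A).card with hs
  have hs1 : 1 ≤ s := by
    obtain ⟨J, hJ⟩ := hex
    exact Finset.card_pos.mpr ⟨J, by simp [hJ]⟩
  set Q : ℚ := ∏ j ∈ univ.filter (fun j => ¬ a j = A), ((p ^ a j : ℕ).totient : ℚ) with hQ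
  have hQ0 : Q ≠ 0 := by
    rw [hQ]
    apply Finset.prod_ne_zero_iff.mpr
    intro j _
    exact_mod_cast (Nat.totient_pos.mpr (pow_pos hp.pos _)).ne'
  have e1 : (∏ j, ((p ^ a j : ℕ).totient : ℚ))
      = ((p ^ A : ℕ).totient : ℚ) ^ s * Q := by
    rw [← Finset.prod_filter_mul_prod_filter_not univ (fun j => a j = A)]
    congr 1
    rw [Finset.prod_congr rfl (fun j hj => by rw [(Finset.mem_filter.mp hj).2]),
      Finset.prod_const, hs]
  have e2 : (∏ j, (if a j = A then -(p:ℚ) ^ (A - 1) else ((p ^ a j : ℕ).totient : ℚ)))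
      = (-(p:ℚ) ^ (A - 1)) ^ s * Q := by
    rw [← Finset.prod_filter_mul_prod_filter_not univ (fun j => a j = A)]
    congr 1
    · rw [Finset.prod_congr rfl (fun j hj => if_pos (Finset.mem_filter.mp hj).2),
        Finset.prod_const, hs]
    · exact Finset.prod_congr rfl (fun j hj => if_neg (Finset.mem_filter.mp hj).2)
  rw [e1, e2]
  have htot : ((p ^ A : ℕ).totient : ℚ) = (p:ℚ)^(A-1) * ((p:ℚ) - 1) := by
    rw [Nat.totient_prime_pow hp (by omega)]
    push_cast [Nat.cast_sub hp.one_le]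
    ring
  rw [htot]
  have efact : ((p:ℚ)^(A-1) * ((p:ℚ)-1))^s * Q + ((p:ℚ)-1) * ((-(p:ℚ)^(A-1))^s * Q)
      = ((p:ℚ)^(A-1))^s * Q * (((p:ℚ)-1)^s + ((p:ℚ)-1) * (-1)^s) := by
    rw [mul_pow, neg_pow]
    ring
  rw [efact]
  have hpne : ((p:ℚ)^(A-1))^s ≠ 0 :=
    pow_ne_zero _ (pow_ne_zero _ (Nat.cast_ne_zero.mpr hp.pos.ne'))
  rw [mul_ne_zero_iff, and_iff_right (mul_ne_zero hpne hQ0)]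
  exact bracket_ne_zero hp.two_le hs1

lemma lcm_ne_zero' {ι : Type*} (s : Finset ι) (f : ι → ℕ) (h : ∀ i ∈ s, f i ≠ 0) :
    s.lcm f ≠ 0 := by
  classical
  induction s using Finset.induction_on with
  | empty => simp
  | @insert a s ha ih =>
    rw [Finset.lcm_insert, lcm_eq_nat_lcm]
    exact Nat.lcm_ne_zero (h a (Finset.mem_insert_self a s))
      (ih fun i hi => h i (Finset.mem_insert_of_mem hi))

lemma factorization_lcm' {ι : Type*} (s : Finset ι) (f : ι → ℕ) (h : ∀ i ∈ s, f i ≠ 0)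
    (p : ℕ) : (s.lcm f).factorization p = s.sup fun i => (f i).factorization p := by
  classical
  induction s using Finset.induction_on with
  | empty => simp
  | @insert a s ha ih =>
    rw [Finset.lcm_insert, lcm_eq_nat_lcm, Finset.sup_insert,
      Nat.factorization_lcm (h a (Finset.mem_insert_self a s))
        (lcm_ne_zero' s f fun i hi => h i (Finset.mem_insert_of_mem hi)),
      Finsupp.sup_apply, ih fun i hi => h i (Finset.mem_insert_of_mem hi)]

lemma lcm_pow_eq {ι : Type*} {p : ℕ} (hp : 0 < p) (s : Finset ι) (e : ι → ℕ) :
    s.lcm (fun i => p ^ e i) = p ^ (s.sup e) := by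
  classical
  induction s using Finset.induction_on with
  | empty => simp
  | @insert a s ha ih =>
    rw [Finset.lcm_insert, lcm_eq_nat_lcm, Finset.sup_insert, ih]
    rcases le_total (e a) (s.sup e) with h | h
    · rw [sup_eq_right.mpr h]
      exact Nat.dvd_antisymm (Nat.lcm_dvd (pow_dvd_pow p h) dvd_rfl) (Nat.dvd_lcm_right _ _)
    · rw [sup_eq_left.mpr h]
      exact Nat.dvd_antisymm (Nat.lcm_dvd dvd_rfl (pow_dvd_pow p h)) (Nat.dvd_lcm_left _ _)

lemma lcm_mul_split {r : ℕ} (u v : Fin r → ℕ)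
    (hcop : (univ.lcm u).Coprime (univ.lcm v)) :
    univ.lcm (fun j => u j * v j) = univ.lcm u * univ.lcm v := by
  apply Nat.dvd_antisymm
  · exact Finset.lcm_dvd fun j _ =>
      mul_dvd_mul (Finset.dvd_lcm (mem_univ j)) (Finset.dvd_lcm (mem_univ j))
  · apply Nat.Coprime.mul_dvd_of_dvd_of_dvd hcop
    · exact Finset.lcm_dvd fun j _ =>
        dvd_trans (dvd_mul_right (u j) (v j)) (Finset.dvd_lcm (mem_univ j))
    · exact Finset.lcm_dvd fun j _ =>
        dvd_trans (dvd_mul_left (v j) (u j)) (Finset.dvd_lcm (mem_univ j))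

lemma sum_split {r : ℕ} (u v : Fin r → ℕ) (hu : ∀ j, 0 < u j) (hv : ∀ j, 0 < v j)
    (hcop : (univ.lcm u).Coprime (univ.lcm v)) :
    ∑ k ∈ range (univ.lcm u * univ.lcm v), ∏ j, vonSterneck k (u j * v j)
      = (∑ k ∈ range (univ.lcm u), ∏ j, vonSterneck k (u j)) *
        (∑ k ∈ range (univ.lcm v), ∏ j, vonSterneck k (v j)) := by
  set U := univ.lcm u with hUdef
  set V := univ.lcm v with hVdef
  have hU : U ≠ 0 := lcm_ne_zero' _ _ fun j _ => (hu j).ne'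
  have hV : V ≠ 0 := lcm_ne_zero' _ _ fun j _ => (hv j).ne'
  have hUV : 0 < U * V := Nat.pos_of_ne_zero (mul_ne_zero hU hV)
  have key : ∑ k ∈ range (U * V), ∏ j, vonSterneck k (u j * v j)
      = ∑ ab ∈ (range U) ×ˢ (range V),
          (∏ j, vonSterneck ab.1 (u j)) * (∏ j, vonSterneck ab.2 (v j)) := by
    refine Finset.sum_nbij' (fun k => (k % U, k % V))
      (fun ab => (Nat.chineseRemainder hcop ab.1 ab.2 : ℕ) % (U * V)) ?_ ?_ ?_ ?_ ?_
    · intro k _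
      exact Finset.mem_product.mpr ⟨mem_range.mpr (Nat.mod_lt _ (Nat.pos_of_ne_zero hU)),
        mem_range.mpr (Nat.mod_lt _ (Nat.pos_of_ne_zero hV))⟩
    · intro ab _
      exact mem_range.mpr (Nat.mod_lt _ hUV)
    · intro k hk
      have hcrt := (Nat.chineseRemainder hcop (k % U) (k % V)).prop
      have h1 : (Nat.chineseRemainder hcop (k % U) (k % V) : ℕ) ≡ k [MOD U] :=
        hcrt.1.trans (Nat.mod_modEq k U)
      have h2 : (Nat.chineseRemainder hcop (k % U) (k % V) : ℕ) ≡ k [MOD V] :=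
        hcrt.2.trans (Nat.mod_modEq k V)
      have h3 : (Nat.chineseRemainder hcop (k % U) (k % V) : ℕ) ≡ k [MOD U * V] :=
        (Nat.modEq_and_modEq_iff_modEq_mul hcop).mp ⟨h1, h2⟩
      show (Nat.chineseRemainder hcop (k % U) (k % V) : ℕ) % (U * V) = k
      rw [show (Nat.chineseRemainder hcop (k % U) (k % V) : ℕ) % (U * V) = k % (U * V) from h3,
        Nat.mod_eq_of_lt (mem_range.mp hk)]
    · intro ab hab
      obtain ⟨ha, hb⟩ := Finset.mem_product.mp hab
      have hcrt := (Nat.chineseRemainder hcop ab.1 ab.2).prop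
      have e1 : ((Nat.chineseRemainder hcop ab.1 ab.2 : ℕ) % (U * V)) % U = ab.1 := by
        rw [Nat.mod_mod_of_dvd _ ⟨V, rfl⟩,
          show (Nat.chineseRemainder hcop ab.1 ab.2 : ℕ) % U = ab.1 % U from hcrt.1,
          Nat.mod_eq_of_lt (mem_range.mp ha)]
      have e2 : ((Nat.chineseRemainder hcop ab.1 ab.2 : ℕ) % (U * V)) % V = ab.2 := by
        rw [Nat.mod_mod_of_dvd _ ⟨U, mul_comm U V⟩,
          show (Nat.chineseRemainder hcop ab.1 ab.2 : ℕ) % V = ab.2 % V from hcrt.2,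
          Nat.mod_eq_of_lt (mem_range.mp hb)]
      show ((Nat.chineseRemainder hcop ab.1 ab.2 : ℕ) % (U * V) % U,
        (Nat.chineseRemainder hcop ab.1 ab.2 : ℕ) % (U * V) % V) = ab
      rw [e1, e2]
    · intro k _
      have hj : ∀ j ∈ (univ : Finset (Fin r)), vonSterneck k (u j * v j)
          = vonSterneck (k % U) (u j) * vonSterneck (k % V) (v j) := by
        intro j _
        have hc : (u j).Coprime (v j) :=
          Nat.Coprime.coprime_dvd_left (Finset.dvd_lcm (mem_univ j))
            (Nat.Coprime.coprime_dvd_right (Finset.dvd_lcm (mem_univ j)) hcop)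
        rw [vs_mul (hu j) (hv j) hc, vs_mod (Finset.dvd_lcm (mem_univ j)),
          vs_mod (Finset.dvd_lcm (mem_univ j))]
      rw [Finset.prod_congr rfl hj, Finset.prod_mul_distrib]
  rw [key, Finset.sum_product, Finset.sum_mul_sum]

lemma key_lemma : ∀ (N : ℕ), ∀ {r : ℕ} (m : Fin r → ℕ), (∀ j, 0 < m j) → univ.lcm m = N →
    ((∑ k ∈ range N, ∏ j, vonSterneck k (m j)) ≠ 0 ↔
      ∀ p : ℕ, p.Prime → p ∣ N →
        ((p ≠ 2 → 2 ≤ (univ.filter fun j => (m j).factorization p = N.factorization p).card) ∧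
          (p = 2 → Even (univ.filter fun j =>
            (m j).factorization p = N.factorization p).card))) := by
  intro N
  induction N using Nat.strong_induction_on with
  | _ N IH =>
  intro r m hm hlcm
  rcases eq_or_ne N 1 with rfl | hN1
  · constructor
    · intro _ q hq hqd
      exact absurd (Nat.dvd_one.mp hqd) hq.ne_one
    · intro _
      have hm1 : ∀ j, m j = 1 := fun j => Nat.dvd_one.mp (hlcm ▸ Finset.dvd_lcm (mem_univ j))
      rw [Finset.sum_range_one, Finset.prod_congr rfl (fun j _ => by rw [hm1 j, vs_one])]
      simp
  · have hN0 : N ≠ 0 := by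
      rw [← hlcm]; exact lcm_ne_zero' _ _ fun j _ => (hm j).ne'
    set p := N.minFac with hpdef
    have hp : p.Prime := Nat.minFac_prime hN1
    have hpN : p ∣ N := Nat.minFac_dvd N
    have hr : (univ : Finset (Fin r)).Nonempty := by
      rcases Nat.eq_zero_or_pos r with rfl | hr0
      · exact absurd (by rw [← hlcm]; rfl : N = 1) hN1
      · exact ⟨⟨0, hr0⟩, mem_univ _⟩
    set a : Fin r → ℕ := fun j => (m j).factorization p with ha
    set A : ℕ := N.factorization p with hA
    set u : Fin r → ℕ := fun j => p ^ a j with hu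
    set v : Fin r → ℕ := fun j => m j / p ^ a j with hv
    have huv : ∀ j, u j * v j = m j := fun j => Nat.ordProj_mul_ordCompl_eq_self (m j) p
    have hvpos : ∀ j, 0 < v j := fun j => Nat.ordCompl_pos p (hm j).ne'
    have hupos : ∀ j, 0 < u j := fun j => pow_pos hp.pos _
    have hAsup : A = univ.sup a := by
      rw [hA, ← hlcm, factorization_lcm' _ _ (fun j _ => (hm j).ne')]
    have hle : ∀ j, a j ≤ A := fun j => hAsup ▸ Finset.le_sup (mem_univ j)
    have hex : ∃ j, a j = A := by
      obtain ⟨j, _, hj⟩ := Finset.exists_mem_eq_sup univ hr a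
      exact ⟨j, (hAsup ▸ hj).symm⟩
    have hA1 : 1 ≤ A := hp.factorization_pos_of_dvd hN0 hpN
    have hlcmu : univ.lcm u = p ^ A := by
      rw [hu, lcm_pow_eq hp.pos, ← hAsup]
    set N' := univ.lcm v with hN'
    have hN'0 : N' ≠ 0 := lcm_ne_zero' _ _ fun j _ => (hvpos j).ne'
    have hvfact : ∀ j q, (v j).factorization q
        = if q = p then 0 else (m j).factorization q := by
      intro j q
      rw [hv]
      simp only
      rw [Nat.factorization_ordCompl (m j) p]
      rcases eq_or_ne q p with rfl | hq
      · simp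
      · simp [Finsupp.erase_ne hq, hq]
    have hpN' : ¬ p ∣ N' := by
      intro hcon
      have h0 : 0 < N'.factorization p := hp.factorization_pos_of_dvd hN'0 hcon
      rw [hN', factorization_lcm' _ _ (fun j _ => (hvpos j).ne')] at h0
      have hz : (univ.sup fun j => (v j).factorization p) = 0 := by
        apply Nat.le_zero.mp
        apply Finset.sup_le
        intro j _
        rw [hvfact j p, if_pos rfl]
      omega
    have hcop : (p ^ A).Coprime N' := Nat.Coprime.pow_left _ ((hp.coprime_iff_not_dvd).mpr hpN')
    have hNsplit : N = p ^ A * N' := by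
      conv_lhs => rw [← hlcm]
      rw [← hlcmu]
      rw [show (univ.lcm m) = univ.lcm (fun j => u j * v j) by
        congr 1; funext j; exact (huv j).symm]
      exact lcm_mul_split u v (by rw [hlcmu]; exact hcop)
    have hN'lt : N' < N := by
      have h2 : 2 ≤ p ^ A := le_trans hp.two_le (Nat.le_self_pow (by omega) p)
      have h3 : 2 * N' ≤ N := hNsplit ▸ Nat.mul_le_mul_right N' h2
      have h4 : 0 < N' := Nat.pos_of_ne_zero hN'0
      omega
    have hsum : (∑ k ∈ range N, ∏ j, vonSterneck k (m j))
        = (∑ k ∈ range (p ^ A), ∏ j, vonSterneck k (u j)) *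
          (∑ k ∈ range N', ∏ j, vonSterneck k (v j)) := by
      have hss := sum_split u v hupos hvpos (by rw [hlcmu]; exact hcop)
      rw [hlcmu] at hss
      rw [hNsplit, ← hss]
      exact Finset.sum_congr rfl fun k _ => Finset.prod_congr rfl fun j _ => by rw [huv j]
    rw [hsum, mul_ne_zero_iff, sum_pp_ne_zero hp a hA1 hle hex,
      IH N' hN'lt v hvpos rfl]
    have hcond : ∀ q, q.Prime → q ∣ N' →
        ((univ.filter fun j => (v j).factorization q = N'.factorization q)
          = (univ.filter fun j => (m j).factorization q = N.factorization q)) := by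
      intro q hq hqN'
      have hqp : q ≠ p := fun h => hpN' (h ▸ hqN')
      have hNq : N.factorization q = N'.factorization q := by
        rw [hNsplit, Nat.factorization_mul (pow_ne_zero _ hp.pos.ne') hN'0]
        have hpq : p ≠ q := Ne.symm hqp
        simp [Nat.Prime.factorization_pow hp, Finsupp.single_apply, hpq]
      apply Finset.filter_congr
      intro j _
      rw [hvfact j q, if_neg hqp, hNq]
    constructor
    · rintro ⟨h1, h2⟩ q hq hqN
      rcases (Nat.Prime.dvd_mul hq).mp (hNsplit ▸ hqN) with hq1 | hq2
      · have hqp : q = p := (Nat.prime_dvd_prime_iff_eq hq hp).mp (hq.dvd_of_dvd_pow hq1)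
        subst hqp
        exact h1
      · have := h2 q hq hq2
        rwa [hcond q hq hq2] at this
    · intro h
      refine ⟨h p hp hpN, ?_⟩
      intro q hq hq2
      rw [hcond q hq hq2]
      exact h q hq (hq2.trans ⟨p ^ A, by rw [hNsplit]; ring⟩)

/-- The orbicyclic function `E(m_1,…,m_r)`. -/
noncomputable def orbE {r : ℕ} (m : Fin r → ℕ) : ℚ :=
  (∑ k ∈ Finset.Icc 1 (Finset.univ.lcm m), ∏ j, vonSterneck k (m j)) /
    ((Finset.univ.lcm m : ℕ) : ℚ)

/-- The polynomial `h_s(x) = ((x-1)^(s-1) + (-1)^s)/x`. -/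
noncomputable def hpoly (s : ℕ) (x : ℚ) : ℚ := ((x - 1) ^ (s - 1) + (-1) ^ s) / x

theorem orbE_ne_zero_iff {r : ℕ} (m : Fin r → ℕ) (hm : ∀ j, 0 < m j) :
    orbE m ≠ 0 ↔
      ∀ p : ℕ, p.Prime → p ∣ Finset.univ.lcm m →
        (Odd p → 2 ≤ (Finset.univ.filter fun j =>
            (m j).factorization p = (Finset.univ.lcm m).factorization p).card) ∧
        (p = 2 → Even (Finset.univ.filter fun j =>
            (m j).factorization p = (Finset.univ.lcm m).factorization p).card) := by
  have hM0 : Finset.univ.lcm m ≠ 0 := lcm_ne_zero' _ _ fun j _ => (hm j).ne'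
  have hM1 : 1 ≤ Finset.univ.lcm m := Nat.one_le_iff_ne_zero.mpr hM0
  have hIcc : (∑ k ∈ Finset.Icc 1 (Finset.univ.lcm m), ∏ j, vonSterneck k (m j))
      = ∑ k ∈ range (Finset.univ.lcm m), ∏ j, vonSterneck k (m j) := by
    have hend : (∏ j, vonSterneck (Finset.univ.lcm m) (m j))
        = ∏ j, vonSterneck 0 (m j) := by
      refine Finset.prod_congr rfl fun j _ => ?_
      rw [vs_of_dvd (hm j) (Finset.dvd_lcm (mem_univ j)), vs_of_dvd (hm j) (dvd_zero _)]
    rw [show Finset.Icc 1 (Finset.univ.lcm m)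
        = Finset.Ico 1 (Finset.univ.lcm m + 1) by rw [Finset.Ico_add_one_right_eq_Icc],
      Finset.sum_Ico_succ_top hM1, hend, Finset.range_eq_Ico,
      Finset.sum_eq_sum_Ico_succ_bot (by omega : 0 < Finset.univ.lcm m)]
    ring
  unfold orbE
  rw [hIcc, div_ne_zero_iff, and_iff_left (Nat.cast_ne_zero.mpr hM0),
    key_lemma (Finset.univ.lcm m) m hm rfl]
  constructor
  · intro h p hp hpd
    obtain ⟨h1, h2⟩ := h p hp hpd
    exact ⟨fun hodd => h1 (by rintro rfl; simp [Nat.odd_iff] at hodd), h2⟩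
  · intro h p hp hpd
    obtain ⟨h1, h2⟩ := h p hp hpd
    exact ⟨fun hne => h1 (hp.odd_of_ne_two hne), h2⟩
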